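/- Let (Ω, μ) be a measure space with 0 < μ(Ω) < ∞, let σ ∈ (1, 2), set q = 2/(3−σ), and let u_* > 0. Then there exists a constant K > 0, depending only on σ and μ(Ω), such that for every measurable function u : Ω → [0, ∞) with ∫_Ω u dμ ≤ 2u_*·μ(Ω), one has (∫_Ω |u − u_*|^q dμ)^{2/q} ≤ K·u_*^{2−σ}·∫_Ω (u^{σ−1} − u_*^{σ−1})·(u − u_*) dμ, where both sides are interpreted in the extended nonnegative reals (the integrand on the right-hand side is nonnegative since s ↦ s^{σ−1} is increasing). -/

import Mathlib

open MeasureTheory Set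
open scoped ENNReal

lemma key_aux {σ : ℝ} (hσ₁ : 1 < σ) (hσ₂ : σ < 2) {a b : ℝ} (hb : 0 ≤ b) (hab : b ≤ a)
    (ha : 0 < a) :
    (σ - 1) * ((a - b) ^ (2:ℝ) * (a + b) ^ (σ - 2)) ≤ (a ^ (σ-1) - b ^ (σ-1)) * (a - b) := by
  have hσ1 : 0 < σ - 1 := by linarith
  have hstep1 : (σ - 1) * a ^ (σ - 2) * (a - b) ≤ a ^ (σ-1) - b ^ (σ-1) := by
    have hba : -1 ≤ b / a - 1 := by
      have : 0 ≤ b / a := div_nonneg hb ha.le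
      linarith
    have hbern := rpow_one_add_le_one_add_mul_self hba (p := σ - 1) hσ1.le (by linarith)
    have h1 : (1 : ℝ) + (b / a - 1) = b / a := by ring
    rw [h1] at hbern
    have hapos : (0:ℝ) < a ^ (σ - 1) := Real.rpow_pos_of_pos ha _
    have hmul := mul_le_mul_of_nonneg_right hbern hapos.le
    have hbd : (b / a) ^ (σ - 1) * a ^ (σ - 1) = b ^ (σ - 1) := by
      rw [← Real.mul_rpow (div_nonneg hb ha.le) ha.le, div_mul_cancel₀ _ ha.ne']
    rw [hbd] at hmul
    have haa : a ^ (σ - 1) = a ^ (σ - 2) * a := by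
      rw [show σ - 1 = (σ - 2) + 1 by ring, Real.rpow_add ha, Real.rpow_one]
    have hdiv : (b / a - 1) * a ^ (σ - 1) = (b - a) * a ^ (σ - 2) := by
      rw [haa]; field_simp
    have key : b ^ (σ-1) ≤ a ^ (σ-1) + (σ-1) * ((b - a) * a ^ (σ-2)) := by
      calc b ^ (σ-1) ≤ (1 + (σ - 1) * (b / a - 1)) * a ^ (σ-1) := hmul
        _ = a ^ (σ-1) + (σ-1) * ((b / a - 1) * a ^ (σ-1)) := by ring
        _ = a ^ (σ-1) + (σ-1) * ((b - a) * a ^ (σ-2)) := by rw [hdiv]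
    linarith [key]
  have hstep2 : (a + b) ^ (σ - 2) ≤ a ^ (σ - 2) :=
    Real.rpow_le_rpow_of_nonpos ha (by linarith) (by linarith)
  have hsq : (a - b) ^ (2:ℝ) = (a - b) * (a - b) := by
    rw [show (2:ℝ) = ((2:ℕ):ℝ) by norm_num, Real.rpow_natCast]; ring
  rw [hsq]
  nlinarith [sub_nonneg.mpr hab, mul_le_mul_of_nonneg_right hstep2 (mul_self_nonneg (a - b))]

lemma key_pt {σ : ℝ} (hσ₁ : 1 < σ) (hσ₂ : σ < 2) {s t : ℝ} (hs : 0 ≤ s) (ht : 0 < t) :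
    |s - t| ^ (2:ℝ) * (s + t) ^ (σ - 2) ≤
      (σ - 1)⁻¹ * ((s ^ (σ-1) - t ^ (σ-1)) * (s - t)) := by
  have hσ1 : 0 < σ - 1 := by linarith
  rw [le_inv_mul_iff₀ hσ1]
  rcases le_total t s with h | h
  · have := key_aux hσ₁ hσ₂ ht.le h (ht.trans_le h)
    rwa [abs_of_nonneg (sub_nonneg.mpr h)]
  · have := key_aux hσ₁ hσ₂ hs h ht
    rw [abs_of_nonpos (sub_nonpos.mpr h)]
    have e1 : (-(s - t)) ^ (2:ℝ) = (t - s) ^ (2:ℝ) := by ring_nf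
    have e2 : (s ^ (σ-1) - t ^ (σ-1)) * (s - t) = (t ^ (σ-1) - s ^ (σ-1)) * (t - s) := by ring
    rw [e1, e2, show s + t = t + s by ring]
    exact this

/-- Lemma 4.2 for `1 < σ < 2` (inequality (1-15)): with `q = 2/(3−σ)` there is a
constant `K > 0`, depending only on `σ` and `μ(Ω)`, such that for every nonnegative
measurable `u` with `∫ u ≤ 2 u_* μ(Ω)`,
`‖u − u_*‖_{L^q}² ≤ K u_*^{2−σ} ∫ (u^{σ−1} − u_*^{σ−1})(u − u_*)`. -/
theorem lower_bound_by_logistic_dissipation_lt_two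
    {Ω : Type*} [MeasurableSpace Ω] (μ : Measure Ω)
    (hμ_pos : 0 < μ univ) (hμ_fin : μ univ < ⊤)
    (σ q : ℝ) (hσ₁ : 1 < σ) (hσ₂ : σ < 2) (hq : q = 2 / (3 - σ)) :
    ∃ K : ℝ, 0 < K ∧
      ∀ u_star : ℝ, 0 < u_star →
        ∀ u : Ω → ℝ, Measurable u → (∀ x, 0 ≤ u x) →
          (∫⁻ x, ENNReal.ofReal (u x) ∂μ) ≤ ENNReal.ofReal (2 * u_star) * μ univ →
          (∫⁻ x, ENNReal.ofReal (|u x - u_star| ^ q) ∂μ) ^ (2 / q) ≤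
            ENNReal.ofReal (K * u_star ^ (2 - σ)) *
              ∫⁻ x, ENNReal.ofReal ((u x ^ (σ - 1) - u_star ^ (σ - 1)) * (u x - u_star)) ∂μ := by
  set M : ℝ := (μ univ).toReal with hM
  have hMpos : 0 < M := ENNReal.toReal_pos hμ_pos.ne' hμ_fin.ne
  have h3σ : (0:ℝ) < 3 - σ := by linarith
  have h2σ : (0:ℝ) < 2 - σ := by linarith
  have hσ1 : (0:ℝ) < σ - 1 := by linarith
  set p : ℝ := 3 - σ with hp
  set r : ℝ := (3 - σ) / (2 - σ) with hr
  have hrpos : 0 < r := div_pos h3σ h2σ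
  have hpq_conj : p.HolderConjugate r := by
    rw [Real.holderConjugate_iff]
    constructor
    · simp only [hp]; linarith
    · rw [hp, hr, inv_div, inv_eq_one_div, ← add_div, div_eq_one_iff_eq (show (3:ℝ) - σ ≠ 0 by linarith)]; ring
  have h2q : 2 / q = p := by
    rw [hq, hp]; field_simp
  have hqval : q = 2 / p := by rw [hq, hp]
  refine ⟨(σ - 1)⁻¹ * (3 ^ (2 - σ) * M ^ (2 - σ)), by positivity, ?_⟩
  intro u_star hu_star u hu_meas hu_nonneg hmass
  set w : Ω → ℝ := fun x => u x + u_star with hw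
  have hwpos : ∀ x, 0 < w x := fun x => by have := hu_nonneg x; simp only [hw]; linarith
  set F : Ω → ℝ := fun x => |u x - u_star| ^ (2:ℝ) * w x ^ (σ - 2) with hF
  have hFnonneg : ∀ x, 0 ≤ F x := fun x =>
    mul_nonneg (Real.rpow_nonneg (abs_nonneg _) _) (Real.rpow_pos_of_pos (hwpos x) _).le
  set D : Ω → ℝ := fun x => (u x ^ (σ - 1) - u_star ^ (σ - 1)) * (u x - u_star) with hD
  -- measurability
  have hFmeas : Measurable F := by
    apply Measurable.mul
    · exact ((hu_meas.sub_const _).abs.pow measurable_const)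
    · exact ((hu_meas.add_const _).pow measurable_const)
  have hwmeas : Measurable w := hu_meas.add_const _
  set φ : Ω → ℝ≥0∞ := fun x => (ENNReal.ofReal (F x)) ^ (1/p) with hφ
  set ψ : Ω → ℝ≥0∞ := fun x => (ENNReal.ofReal (w x)) ^ (1/r) with hψ
  have hφmeas : Measurable φ := (hFmeas.ennreal_ofReal).pow measurable_const
  have hψmeas : Measurable ψ := (hwmeas.ennreal_ofReal).pow measurable_const
  -- pointwise product identity
  have hprod : ∀ x, ENNReal.ofReal (|u x - u_star| ^ q) = φ x * ψ x := by
    intro x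
    have hd : (0:ℝ) ≤ |u x - u_star| := abs_nonneg _
    simp only [hφ, hψ]
    rw [ENNReal.ofReal_rpow_of_nonneg (hFnonneg x) (by positivity),
      ENNReal.ofReal_rpow_of_nonneg (hwpos x).le (by positivity),
      ← ENNReal.ofReal_mul (Real.rpow_nonneg (hFnonneg x) _)]
    congr 1
    have e1 : F x ^ (1/p) = |u x - u_star| ^ q * w x ^ ((σ - 2) / p) := by
      simp only [hF]
      rw [Real.mul_rpow (Real.rpow_nonneg hd _) (Real.rpow_pos_of_pos (hwpos x) _).le,
        ← Real.rpow_mul hd, ← Real.rpow_mul (hwpos x).le]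
      rw [hqval]
      ring_nf
    rw [e1, mul_assoc, ← Real.rpow_add (hwpos x)]
    have e2 : (σ - 2) / p + 1 / r = 0 := by
      rw [hp, hr]; field_simp; ring
    rw [e2, Real.rpow_zero, mul_one]
  -- exponent identities
  have hφp : ∀ x, φ x ^ p = ENNReal.ofReal (F x) := by
    intro x
    rw [hφ, ← ENNReal.rpow_mul, one_div, inv_mul_cancel₀ (by positivity : p ≠ 0),
      ENNReal.rpow_one]
  have hψr : ∀ x, ψ x ^ r = ENNReal.ofReal (w x) := by
    intro x
    rw [hψ, ← ENNReal.rpow_mul, one_div, inv_mul_cancel₀ hrpos.ne', ENNReal.rpow_one]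
  -- Hölder
  have holder := ENNReal.lintegral_mul_le_Lp_mul_Lq μ hpq_conj hφmeas.aemeasurable
    hψmeas.aemeasurable
  simp only [Pi.mul_apply] at holder
  set A : ℝ≥0∞ := ∫⁻ x, ENNReal.ofReal (F x) ∂μ with hA
  set B : ℝ≥0∞ := ∫⁻ x, ENNReal.ofReal (w x) ∂μ with hB
  have holder' : (∫⁻ x, ENNReal.ofReal (|u x - u_star| ^ q) ∂μ) ≤ A ^ (1/p) * B ^ (1/r) := by
    calc (∫⁻ x, ENNReal.ofReal (|u x - u_star| ^ q) ∂μ) = ∫⁻ x, φ x * ψ x ∂μ :=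
          lintegral_congr hprod
      _ ≤ (∫⁻ x, φ x ^ p ∂μ) ^ (1/p) * (∫⁻ x, ψ x ^ r ∂μ) ^ (1/r) := holder
      _ = A ^ (1/p) * B ^ (1/r) := by
          rw [hA, hB, lintegral_congr hφp, lintegral_congr hψr]
  -- raise to power p
  have hmain : (∫⁻ x, ENNReal.ofReal (|u x - u_star| ^ q) ∂μ) ^ (2/q) ≤ A * B ^ (2 - σ) := by
    rw [h2q]
    calc (∫⁻ x, ENNReal.ofReal (|u x - u_star| ^ q) ∂μ) ^ p
        ≤ (A ^ (1/p) * B ^ (1/r)) ^ p := ENNReal.rpow_le_rpow holder' (by positivity)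
      _ = A ^ (1/p * p) * B ^ (1/r * p) := by
          rw [ENNReal.mul_rpow_of_nonneg _ _ (by positivity : (0:ℝ) ≤ p),
            ← ENNReal.rpow_mul, ← ENNReal.rpow_mul]
      _ = A * B ^ (2 - σ) := by
          rw [one_div, inv_mul_cancel₀ (by positivity : p ≠ 0), ENNReal.rpow_one]
          congr 1
          rw [hr, hp]; congr 1; rw [one_div_div, div_mul_cancel₀ _ (show (3:ℝ) - σ ≠ 0 by linarith)]
  -- bound A
  set I : ℝ≥0∞ := ∫⁻ x, ENNReal.ofReal (D x) ∂μ with hI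
  have hAle : A ≤ ENNReal.ofReal (σ - 1)⁻¹ * I := by
    rw [hA, hI, ← lintegral_const_mul' _ _ ENNReal.ofReal_ne_top]
    apply lintegral_mono
    intro x
    dsimp only
    rw [← ENNReal.ofReal_mul (by positivity)]
    exact ENNReal.ofReal_le_ofReal (key_pt hσ₁ hσ₂ (hu_nonneg x) hu_star)
  -- bound B
  have hBle : B ≤ ENNReal.ofReal (3 * u_star) * μ univ := by
    have : B = (∫⁻ x, ENNReal.ofReal (u x) ∂μ) + ENNReal.ofReal u_star * μ univ := by
      rw [hB]
      have : ∀ x, ENNReal.ofReal (w x) = ENNReal.ofReal (u x) + ENNReal.ofReal u_star :=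
        fun x => by rw [hw, ENNReal.ofReal_add (hu_nonneg x) hu_star.le]
      rw [lintegral_congr this, lintegral_add_right _ measurable_const, lintegral_const]
    rw [this]
    calc (∫⁻ x, ENNReal.ofReal (u x) ∂μ) + ENNReal.ofReal u_star * μ univ
        ≤ ENNReal.ofReal (2 * u_star) * μ univ + ENNReal.ofReal u_star * μ univ :=
          add_le_add_left hmass _
      _ = (ENNReal.ofReal (2 * u_star) + ENNReal.ofReal u_star) * μ univ := by ring
      _ = ENNReal.ofReal (3 * u_star) * μ univ := by
          rw [← ENNReal.ofReal_add (by positivity) hu_star.le]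
          congr 2
          ring
  have hBpow : B ^ (2 - σ) ≤ ENNReal.ofReal ((3 * u_star) ^ (2 - σ)) *
      ENNReal.ofReal (M ^ (2 - σ)) := by
    calc B ^ (2 - σ) ≤ (ENNReal.ofReal (3 * u_star) * μ univ) ^ (2 - σ) :=
          ENNReal.rpow_le_rpow hBle h2σ.le
      _ = ENNReal.ofReal (3 * u_star) ^ (2 - σ) * (μ univ) ^ (2 - σ) :=
          ENNReal.mul_rpow_of_nonneg _ _ h2σ.le
      _ = ENNReal.ofReal ((3 * u_star) ^ (2 - σ)) * ENNReal.ofReal (M ^ (2 - σ)) := by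
          rw [ENNReal.ofReal_rpow_of_pos (by positivity)]
          congr 1
          rw [show μ univ = ENNReal.ofReal M by rw [hM, ENNReal.ofReal_toReal hμ_fin.ne],
            ENNReal.ofReal_rpow_of_pos hMpos]
  -- assemble
  calc (∫⁻ x, ENNReal.ofReal (|u x - u_star| ^ q) ∂μ) ^ (2/q)
      ≤ A * B ^ (2 - σ) := hmain
    _ ≤ (ENNReal.ofReal (σ - 1)⁻¹ * I) *
        (ENNReal.ofReal ((3 * u_star) ^ (2 - σ)) * ENNReal.ofReal (M ^ (2 - σ))) :=
        mul_le_mul' hAle hBpow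
    _ = (ENNReal.ofReal (σ - 1)⁻¹ * ENNReal.ofReal ((3 * u_star) ^ (2 - σ)) *
        ENNReal.ofReal (M ^ (2 - σ))) * I := by ring
    _ = ENNReal.ofReal ((σ - 1)⁻¹ * (3 ^ (2 - σ) * M ^ (2 - σ)) * u_star ^ (2 - σ)) * I := by
        congr 1
        rw [← ENNReal.ofReal_mul (by positivity), ← ENNReal.ofReal_mul (by positivity)]
        congr 1
        rw [Real.mul_rpow (by norm_num : (0:ℝ) ≤ 3) hu_star.le]
        ring
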